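/- Suppose f : X∖C → X (as in the context) is strongly transitive and has a periodic point (Per(f) ≠ ∅). Let ℓ = min{n ∈ ℕ : Fix(f^n) ≠ ∅}. Then there is an open set V ⊆ X such that: (1) V ∪ f*(V) ∪ ⋯ ∪ (f*)^{ℓ−1}(V) ⊇ X∖C; (2) (f*)^ℓ(V) ⊆ V; and (3) the restriction f^{ℓj}|_V is strongly transitive for every j ≥ 1. -/

import Mathlib

open Set Function

variable {X : Type*} [MetricSpace X]

/-- `n`-step preimage of `A` under the partial map `g` (defined on `good`),
relative to the ambient set `W`: the first `n` iterates must avoid the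
complement of `good` and stay in `W`. -/
def preImg (g : X → X) (good W : Set X) (n : ℕ) (A : Set X) : Set X :=
  {x | x ∈ W ∧ (∀ j < n, g^[j] x ∈ good ∩ W) ∧ g^[n] x ∈ A}

/-- The α-limit set `α_g(x) = ⋂_{n≥0} closure (⋃_{k≥0} g^{-k}(g^{-n}(x)))`. -/
def alphaLim (g : X → X) (good W : Set X) (x : X) : Set X :=
  ⋂ n : ℕ, closure (⋃ k : ℕ, preImg g good W k (preImg g good W n {x}))

/-- `f*(U) = f(U ∖ C)`. -/
def fstar (f : X → X) (C : Set X) (U : Set X) : Set X := f '' (U \ C)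

/-- The set of points whose orbit hits `C` within the first `ℓ` iterates,
i.e. the critical set of the partial map `f^ℓ`. -/
def critSet (f : X → X) (C : Set X) (ℓ : ℕ) : Set X := {x | ∃ j < ℓ, f^[j] x ∈ C}

/-- `g` (defined off the complement of `good`) is strongly transitive:
`α_g(x) = X` for every `x` in the domain. -/
def StronglyTransitiveMap (g : X → X) (good : Set X) : Prop :=
  ∀ x ∈ good, alphaLim g good Set.univ x = Set.univ

/-- `g` is transitive: `α_g(x) = X` for a dense set of points of the domain. -/
def TransitiveMap (g : X → X) (good : Set X) : Prop :=
  Dense {x | x ∈ good ∧ alphaLim g good Set.univ x = Set.univ}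

/-- `g` is transitive on the open set `W`: the α-limit set (in the whole space)
of each point of a dense subset of `W` contains the closure of `W`. -/
def TransitiveOnOpen (g : X → X) (good W : Set X) : Prop :=
  ∃ D : Set X, D ⊆ W ∧ W ⊆ closure D ∧ ∀ x ∈ D, closure W ⊆ alphaLim g good Set.univ x

/-- The restriction `g|_W` is strongly transitive: the α-limit set under the
restriction of every point of `W` is dense in `W`. -/
def StronglyTransitiveOnSet (g : X → X) (good W : Set X) : Prop :=
  ∀ x ∈ W, W ⊆ closure (alphaLim g good W x)

set_option linter.unusedSectionVars false

namespace Stmt11Aux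

/-- `y` has a `t`-step orbit avoiding `C`. -/
def Gd (f : X → X) (C : Set X) (t : ℕ) (y : X) : Prop := ∀ i < t, f^[i] y ∉ C

variable {f : X → X} {C : Set X}

lemma gd_mono {t s : ℕ} {y : X} (h : Gd f C t y) (hs : s ≤ t) : Gd f C s y :=
  fun i hi => h i (lt_of_lt_of_le hi hs)

lemma gd_add {a b : ℕ} {y : X} (h1 : Gd f C a y) (h2 : Gd f C b (f^[a] y)) :
    Gd f C (a + b) y := by
  intro i hi
  rcases lt_or_ge i a with h | h
  · exact h1 i h
  · have hi' : i = (i - a) + a := by omega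
    rw [hi', Function.iterate_add_apply]
    exact h2 (i - a) (by omega)

lemma gd_split₂ {a b : ℕ} {y : X} (h : Gd f C (a + b) y) : Gd f C b (f^[a] y) := by
  intro i hi
  rw [← Function.iterate_add_apply]
  exact h (i + a) (by omega)

lemma gd_succ_iff {t : ℕ} {y : X} : Gd f C (t + 1) y ↔ y ∉ C ∧ Gd f C t (f y) := by
  constructor
  · intro h
    refine ⟨h 0 (by omega), fun i hi => ?_⟩
    rw [← Function.iterate_succ_apply]
    exact h (i + 1) (by omega)
  · rintro ⟨h0, h⟩ i hi
    cases i with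
    | zero => exact h0
    | succ n => rw [Function.iterate_succ_apply]; exact h n (by omega)

section Topology

variable (hf : IsLocalHomeomorphOn f Cᶜ) (hCcl : IsClosed C)
include hf hCcl

omit hCcl in
lemma contAt : ∀ (t : ℕ) (y : X), Gd f C t y → ContinuousAt f^[t] y := by
  intro t
  induction t with
  | zero => intro y _; simpa using continuousAt_id
  | succ n ih =>
    intro y hy
    rw [gd_succ_iff] at hy
    rw [Function.iterate_succ]
    exact ContinuousAt.comp (ih (f y) hy.2) (hf.continuousAt hy.1)

lemma gdOpen : ∀ t : ℕ, IsOpen {y : X | Gd f C t y} := by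
  intro t
  induction t with
  | zero =>
    have : {y : X | Gd f C 0 y} = univ := by ext y; simp [Gd]
    rw [this]; exact isOpen_univ
  | succ n ih =>
    have h2 : {y : X | Gd f C (n+1) y} = Cᶜ ∩ f ⁻¹' {y | Gd f C n y} := by
      ext y
      simp only [Set.mem_setOf_eq, Set.mem_inter_iff, Set.mem_compl_iff, Set.mem_preimage]
      exact gd_succ_iff
    rw [h2]
    exact (hf.continuousOn).isOpen_inter_preimage hCcl.isOpen_compl ih

/-- The fundamental pullback lemma: a good chain from `y` can be pulled back
locally, so that every point near the endpoint has a good preimage near `y`. -/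
lemma pull : ∀ (t : ℕ) (y : X), Gd f C t y → ∀ O : Set X, IsOpen O → y ∈ O →
    ∃ Ω : Set X, IsOpen Ω ∧ f^[t] y ∈ Ω ∧
      ∀ ζ ∈ Ω, ∃ z ∈ O, Gd f C t z ∧ f^[t] z = ζ := by
  intro t
  induction t with
  | zero =>
    intro y _ O hO hyO
    exact ⟨O, hO, by simpa using hyO, fun ζ hζ => ⟨ζ, hζ, fun i hi => absurd hi (by omega), by simp⟩⟩
  | succ n ih =>
    intro y hy O hO hyO
    rw [gd_succ_iff] at hy
    obtain ⟨e, hye, hfe⟩ := hf y hy.1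
    set O' : Set X := O ∩ e.source ∩ Cᶜ with hO'
    have hO'open : IsOpen O' := (hO.inter e.open_source).inter hCcl.isOpen_compl
    have hyO' : y ∈ O' := ⟨⟨hyO, hye⟩, hy.1⟩
    set Ω₁ : Set X := e.target ∩ e.symm ⁻¹' O' with hΩ₁
    have hΩ₁open : IsOpen Ω₁ :=
      e.symm.continuousOn.isOpen_inter_preimage e.open_target hO'open
    have hfyΩ₁ : f y ∈ Ω₁ := by
      constructor
      · rw [hfe]; exact e.map_source hye
      · show e.symm (f y) ∈ O'
        rw [hfe, e.left_inv hye]; exact hyO'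
    obtain ⟨Ω, hΩopen, hmem, hpull⟩ := ih (f y) hy.2 Ω₁ hΩ₁open hfyΩ₁
    refine ⟨Ω, hΩopen, by rwa [Function.iterate_succ_apply], ?_⟩
    intro ζ hζ
    obtain ⟨z₁, hz₁Ω₁, hz₁gd, hz₁eq⟩ := hpull ζ hζ
    set z : X := e.symm z₁ with hz
    have hzsrc : z ∈ e.source := e.map_target hz₁Ω₁.1
    have hzO' : z ∈ O' := hz₁Ω₁.2
    have hfz : f z = z₁ := by rw [hfe]; exact e.right_inv hz₁Ω₁.1
    refine ⟨z, hzO'.1.1, ?_, ?_⟩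
    · rw [gd_succ_iff, hfz]; exact ⟨hzO'.2, hz₁gd⟩
    · rw [Function.iterate_succ_apply, hfz]; exact hz₁eq

end Topology

/-- Density of late preimages, from strong transitivity. -/
lemma stDens (hst : StronglyTransitiveMap f Cᶜ) {x : X} (hx : x ∉ C) (N : ℕ) :
    closure (⋃ k : ℕ, {y : X | Gd f C (k + N) y ∧ f^[k + N] y = x}) = univ := by
  have h := hst x hx
  have h2 : closure (⋃ k, preImg f Cᶜ univ k (preImg f Cᶜ univ N {x})) = univ := by
    apply eq_univ_of_univ_subset
    intro y _
    have hy2 : y ∈ alphaLim f Cᶜ univ x := by rw [h]; exact mem_univ y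
    exact Set.mem_iInter.1 hy2 N
  have h3 : (⋃ k, preImg f Cᶜ univ k (preImg f Cᶜ univ N {x}))
      = ⋃ k, {y : X | Gd f C (k + N) y ∧ f^[k + N] y = x} := by
    apply Set.iUnion_congr
    intro k
    ext y
    simp only [preImg, mem_setOf_eq, mem_singleton_iff]
    constructor
    · rintro ⟨-, hch, -, hch2, hx2⟩
      refine ⟨gd_add (fun i hi => (hch i hi).1) (fun i hi => (hch2 i hi).1), ?_⟩
      rw [Nat.add_comm, Function.iterate_add_apply]
      exact hx2
    · rintro ⟨hgd, heq⟩
      refine ⟨trivial, fun i hi => ⟨hgd i (by omega), trivial⟩, trivial,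
        fun i hi => ⟨?_, trivial⟩, ?_⟩
      · rw [← Function.iterate_add_apply]
        exact hgd (i + k) (by omega)
      · rw [← Function.iterate_add_apply, Nat.add_comm N k]
        exact heq
  rw [← h3]
  exact h2

lemma stDens0 (hst : StronglyTransitiveMap f Cᶜ) {x : X} (hx : x ∉ C) :
    closure {y : X | ∃ t, Gd f C t y ∧ f^[t] y = x} = univ := by
  have h := stDens hst hx 0
  have h2 : (⋃ k : ℕ, {y : X | Gd f C (k + 0) y ∧ f^[k + 0] y = x})
      = {y : X | ∃ t, Gd f C t y ∧ f^[t] y = x} := by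
    ext y
    simp only [Nat.add_zero, mem_iUnion, mem_setOf_eq]
  rwa [h2] at h

/-- Preimages of `p` at times congruent to `r` mod `ℓ`. -/
def PreB (f : X → X) (C : Set X) (p : X) (ℓ r : ℕ) : Set X :=
  {y | ∃ t, t % ℓ = r % ℓ ∧ Gd f C t y ∧ f^[t] y = p}

/-- The phase-`r` set: closure of the preimages of `p` at times `≡ r [mod ℓ]`. -/
def Ph (f : X → X) (C : Set X) (p : X) (ℓ r : ℕ) : Set X := closure (PreB f C p ℓ r)

section Phase

variable (hf : IsLocalHomeomorphOn f Cᶜ) (hCcl : IsClosed C)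
  {p : X} {ℓ : ℕ} (hℓ1 : 1 ≤ ℓ) (hpg : Gd f C ℓ p) (hpfix : f^[ℓ] p = p)

include hf hCcl hℓ1 hpg hpfix

lemma pfix : ∀ k : ℕ, f^[k * ℓ] p = p := by
  intro k
  induction k with
  | zero => simp
  | succ n ih =>
    have h : (n + 1) * ℓ = ℓ + n * ℓ := by ring
    rw [h, Function.iterate_add_apply, ih, hpfix]

lemma pgood : ∀ i : ℕ, f^[i] p ∉ C := by
  intro i
  have h1 : i = i % ℓ + ℓ * (i / ℓ) := by
    have := Nat.mod_add_div i ℓ; omega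
  rw [h1, Function.iterate_add_apply, mul_comm ℓ (i / ℓ),
    pfix hf hCcl hℓ1 hpg hpfix]
  exact hpg (i % ℓ) (Nat.mod_lt _ (by omega))

/-- Chains ending at `p` may be extended by multiples of `ℓ`. -/
lemma bump {t : ℕ} {y : X} (h1 : Gd f C t y) (h2 : f^[t] y = p) :
    ∀ k : ℕ, Gd f C (t + k * ℓ) y ∧ f^[t + k * ℓ] y = p := by
  intro k
  constructor
  · apply gd_add h1
    intro i _
    rw [h2]
    exact pgood hf hCcl hℓ1 hpg hpfix i
  · rw [Nat.add_comm, Function.iterate_add_apply, h2]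
    exact pfix hf hCcl hℓ1 hpg hpfix k

omit hf hCcl hℓ1 hpg hpfix in
lemma phMod {r r' : ℕ} (h : r % ℓ = r' % ℓ) : Ph f C p ℓ r = Ph f C p ℓ r' := by
  unfold Ph PreB
  rw [h]

/-- Forward grading: the `t`-step image of a phase-`(r+t)` point is phase-`r`. -/
lemma fwd {t r : ℕ} {y : X} (hgd : Gd f C t y) (hy : y ∈ Ph f C p ℓ (r + t)) :
    f^[t] y ∈ Ph f C p ℓ r := by
  have hmul : t * ℓ = t * (ℓ - 1) + t := by
    have h2 : ℓ = (ℓ - 1) + 1 := by omega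
    calc t * ℓ = t * ((ℓ - 1) + 1) := by rw [← h2]
    _ = t * (ℓ - 1) + t := by ring
  have himg : f^[t] '' (PreB f C p ℓ (r + t)) ⊆ PreB f C p ℓ r := by
    rintro - ⟨ξ, ⟨t', ht'm, ht'gd, ht'eq⟩, rfl⟩
    obtain ⟨hgd2, heq2⟩ := bump hf hCcl hℓ1 hpg hpfix ht'gd ht'eq t
    have hsum : t + (t' + t * (ℓ - 1)) = t' + t * ℓ := by omega
    rw [← hsum] at hgd2 heq2
    refine ⟨t' + t * (ℓ - 1), ?_, ?_, ?_⟩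
    · have e1 : (t' + t * (ℓ - 1)) % ℓ = (r + t + t * (ℓ - 1)) % ℓ :=
        Nat.ModEq.add_right _ ht'm
      have e2 : r + t + t * (ℓ - 1) = r + t * ℓ := by omega
      rw [e1, e2]
      exact Nat.add_mul_mod_self_right r t ℓ
    · exact gd_split₂ hgd2
    · rw [← Function.iterate_add_apply, Nat.add_comm]
      exact heq2
  exact closure_mono himg
    (((contAt hf t y hgd).continuousWithinAt).mem_closure_image hy)

omit hℓ1 hpg hpfix in
/-- Backward grading. -/
lemma bwd {t r : ℕ} {y : X} (hgd : Gd f C t y) (hy : f^[t] y ∈ Ph f C p ℓ r) :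
    y ∈ Ph f C p ℓ (r + t) := by
  rw [Ph, mem_closure_iff]
  intro O hO hyO
  obtain ⟨Ω, hΩo, hΩm, hΩp⟩ := pull hf hCcl t y hgd O hO hyO
  obtain ⟨ξ, hξΩ, t', ht'm, ht'gd, ht'eq⟩ := mem_closure_iff.1 hy Ω hΩo hΩm
  obtain ⟨z, hzO, hzgd, hzeq⟩ := hΩp ξ hξΩ
  refine ⟨z, hzO, t + t', ?_, ?_, ?_⟩
  · have e1 : Nat.ModEq ℓ (t + t') (t + r) := Nat.ModEq.add_left t ht'm
    rw [Nat.add_comm r t]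
    exact e1
  · exact gd_add hzgd (by rwa [hzeq])
  · rw [Nat.add_comm, Function.iterate_add_apply, hzeq]; exact ht'eq

omit hℓ1 hpg hpfix in
lemma bwd' {t r : ℕ} {y : X} (hgd : Gd f C t y)
    (hy : f^[t] y ∈ interior (Ph f C p ℓ r)) :
    y ∈ interior (Ph f C p ℓ (r + t)) := by
  set A : Set X := {z | Gd f C t z ∧ f^[t] z ∈ interior (Ph f C p ℓ r)} with hA
  have hAopen : IsOpen A := by
    rw [isOpen_iff_mem_nhds]
    rintro z ⟨hz1, hz2⟩
    have h1 : {w : X | Gd f C t w} ∈ nhds z := (gdOpen hf hCcl t).mem_nhds hz1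
    have h2 : f^[t] ⁻¹' interior (Ph f C p ℓ r) ∈ nhds z :=
      (contAt hf t z hz1).preimage_mem_nhds (isOpen_interior.mem_nhds hz2)
    filter_upwards [h1, h2] with w hw1 hw2 using ⟨hw1, hw2⟩
  have hsub : A ⊆ Ph f C p ℓ (r + t) := fun z hz =>
    bwd hf hCcl hz.1 (interior_subset hz.2)
  exact mem_interior.2 ⟨A, hsub, hAopen, hgd, hy⟩

lemma fwd' {t r : ℕ} {y : X} (hgd : Gd f C t y)
    (hy : y ∈ interior (Ph f C p ℓ (r + t))) :
    f^[t] y ∈ interior (Ph f C p ℓ r) := by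
  obtain ⟨Ω, hΩo, hΩm, hΩp⟩ := pull hf hCcl t y hgd
    (interior (Ph f C p ℓ (r + t)) ∩ {z | Gd f C t z})
    (isOpen_interior.inter (gdOpen hf hCcl t)) ⟨hy, hgd⟩
  have hsub : Ω ⊆ Ph f C p ℓ r := by
    intro ζ hζ
    obtain ⟨z, hz, hzgd, rfl⟩ := hΩp ζ hζ
    exact fwd hf hCcl hℓ1 hpg hpfix hzgd (interior_subset hz.1)
  exact mem_interior.2 ⟨Ω, hsub, hΩo, hΩm⟩

/-- `p` lies in the interior of its own phase-`0` set. -/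
lemma pint [BaireSpace X] [Nonempty X]
    (hdens : closure {y : X | ∃ t, Gd f C t y ∧ f^[t] y = p} = univ) :
    p ∈ interior (Ph f C p ℓ 0) := by
  have hcover : (⋃ r : Fin ℓ, Ph f C p ℓ r.val) = univ := by
    apply eq_univ_of_univ_subset
    rw [← hdens]
    apply closure_minimal
    · rintro y ⟨t, hgd, heq⟩
      exact mem_iUnion.2 ⟨⟨t % ℓ, Nat.mod_lt _ (by omega)⟩,
        subset_closure ⟨t, (Nat.mod_mod_of_dvd t dvd_rfl).symm, hgd, heq⟩⟩
    · exact isClosed_iUnion_of_finite (fun r => isClosed_closure)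
  obtain ⟨r₀, q, hq⟩ :=
    nonempty_interior_of_iUnion_of_closed (fun r : Fin ℓ => isClosed_closure) hcover
  have hq2 : q ∈ Ph f C p ℓ r₀.val := interior_subset hq
  obtain ⟨ξ, hξint, t', ht'm, ht'gd, ht'eq⟩ :=
    mem_closure_iff.1 hq2 _ isOpen_interior hq
  have hPh : Ph f C p ℓ r₀.val = Ph f C p ℓ (0 + t') := by
    apply phMod
    rw [Nat.zero_add]
    exact ht'm.symm
  have h := fwd' hf hCcl hℓ1 hpg hpfix ht'gd (by rw [← hPh]; exact hξint)
  rwa [ht'eq] at h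

/-- If two phase interiors meet, then `p` is interior to the difference phase. -/
lemma delta {a : ℕ}
    (hne : (interior (Ph f C p ℓ a) ∩ interior (Ph f C p ℓ 0)).Nonempty) :
    p ∈ interior (Ph f C p ℓ (a * (ℓ - 1))) := by
  obtain ⟨q, hq⟩ := hne
  have hq2 : q ∈ Ph f C p ℓ a := interior_subset hq.1
  obtain ⟨ξ, hξmem, t', ht'm, ht'gd, ht'eq⟩ := mem_closure_iff.1 hq2 _
    (isOpen_interior.inter isOpen_interior) hq
  have hmul : a * (ℓ - 1) + a = a * ℓ := by
    have h2 : ℓ = (ℓ - 1) + 1 := by omega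
    calc a * (ℓ - 1) + a = a * ((ℓ - 1) + 1) := by ring
    _ = a * ℓ := by rw [← h2]
  have hPh : Ph f C p ℓ 0 = Ph f C p ℓ (a * (ℓ - 1) + t') := by
    apply phMod
    have e1 : (a * (ℓ - 1) + t') % ℓ = (a * (ℓ - 1) + a) % ℓ :=
      Nat.ModEq.add_left _ ht'm
    rw [e1, hmul, Nat.mul_mod_left, Nat.zero_mod]
  have h := fwd' hf hCcl hℓ1 hpg hpfix ht'gd (by rw [← hPh]; exact hξmem.2)
  rwa [ht'eq] at h

/-- `ℓ`-congruence preimage times of `p` can be upgraded to any `m`-congruence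
refinement, `ℓ ∣ m`. -/
lemma preBm {m : ℕ} (hm1 : 1 ≤ m) (hℓm : ℓ ∣ m) :
    ∀ (γ : ℕ) (y : X), y ∈ PreB f C p ℓ γ →
      ∃ u, u % m = γ % m ∧ Gd f C u y ∧ f^[u] y = p := by
  rintro γ y ⟨t, htm, htgd, hteq⟩
  have hTt : t ≤ γ + m * (t + 1) := by
    have h1 : t + 1 ≤ m * (t + 1) := Nat.le_mul_of_pos_left _ (by omega)
    omega
  have hdvd : ℓ ∣ (γ + m * (t + 1)) - t := by
    have h2 : Nat.ModEq ℓ (m * (t + 1)) 0 :=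
      (Nat.modEq_zero_iff_dvd).2 (hℓm.mul_right _)
    have h3 : Nat.ModEq ℓ t γ := by
      show t % ℓ = γ % ℓ; exact htm
    have h4 : Nat.ModEq ℓ t (γ + m * (t + 1)) := by
      calc t ≡ γ [MOD ℓ] := h3
      _ = γ + 0 := by omega
      _ ≡ γ + m * (t + 1) [MOD ℓ] := (Nat.ModEq.add_left γ h2).symm
    exact (Nat.modEq_iff_dvd' hTt).1 h4
  obtain ⟨k, hk⟩ := hdvd
  obtain ⟨hgd', heq'⟩ := bump hf hCcl hℓ1 hpg hpfix htgd hteq k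
  refine ⟨t + k * ℓ, ?_, hgd', heq'⟩
  have hsum : t + k * ℓ = γ + m * (t + 1) := by
    have h5 : ℓ * k = k * ℓ := Nat.mul_comm ℓ k
    omega
  rw [hsum]
  exact Nat.add_mul_mod_self_left γ m (t + 1)

/-- The core reachability lemma: any point of the interior phase-0 set off `C`
has good preimages in any open set meeting the phase-0 interior, at times of
any prescribed residue `ρ ≡ 0 (mod ℓ)` modulo `m`, and arbitrarily late. -/
lemma core [BaireSpace X] [Nonempty X]
    (hst : StronglyTransitiveMap f Cᶜ)
    {m j : ℕ} (hm : m = ℓ * j) (hj : 1 ≤ j)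
    (hpint : p ∈ interior (Ph f C p ℓ 0))
    {xh : X} (hxU : xh ∈ interior (Ph f C p ℓ 0)) (hxC : xh ∉ C)
    (O : Set X) (hO : IsOpen O) (hne : (O ∩ interior (Ph f C p ℓ 0)).Nonempty)
    (N ρ : ℕ) (hρ : ρ % ℓ = 0) :
    ∃ z ∈ O, ∃ t, N ≤ t ∧ t % m = ρ % m ∧ Gd f C t z ∧ f^[t] z = xh := by
  have hℓm : ℓ ∣ m := hm ▸ dvd_mul_right ℓ j
  have hm1 : 1 ≤ m := by
    rw [hm]; exact Nat.one_le_iff_ne_zero.2 (by positivity)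
  set O' : Set X := O ∩ interior (Ph f C p ℓ 0) with hO'def
  have hO'open : IsOpen O' := hO.inter isOpen_interior
  -- choose w, a preimage of p in O' at a time ≡ 0 mod m
  obtain ⟨w0, hw0⟩ := hne
  have hw0Ph : w0 ∈ Ph f C p ℓ 0 := interior_subset hw0.2
  obtain ⟨w, hwO', hwPreB⟩ := mem_closure_iff.1 hw0Ph O' hO'open hw0
  obtain ⟨t₁, ht₁m, ht₁gd, ht₁eq⟩ := preBm hf hCcl hℓ1 hpg hpfix hm1 hℓm 0 w hwPreB
  -- junction 1: pull back through the chain of w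
  obtain ⟨Ω₁, hΩ₁o, hΩ₁p, hΩ₁pull⟩ := pull hf hCcl t₁ w ht₁gd O' hO'open hwO'
  rw [ht₁eq] at hΩ₁p
  -- reach: for every γ, a neighborhood of p that can be connected to O'
  have reach : ∀ γ : ℕ, ∃ Ω : Set X, IsOpen Ω ∧ p ∈ Ω ∧
      (p ∈ interior (Ph f C p ℓ γ) → ∃ v, v % m = (t₁ + γ) % m ∧
        ∀ ζ ∈ Ω, ∃ z ∈ O', Gd f C v z ∧ f^[v] z = ζ) := by
    intro γ
    by_cases hpγ : p ∈ interior (Ph f C p ℓ γ)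
    · have hpPh : p ∈ Ph f C p ℓ γ := interior_subset hpγ
      obtain ⟨η, hηΩ₁, hηPreB⟩ := mem_closure_iff.1 hpPh Ω₁ hΩ₁o hΩ₁p
      obtain ⟨u, hum, hugd, hueq⟩ := preBm hf hCcl hℓ1 hpg hpfix hm1 hℓm γ η hηPreB
      obtain ⟨wt, hwtO', hwtgd, hwteq⟩ := hΩ₁pull η hηΩ₁
      have hwtgd2 : Gd f C (t₁ + u) wt := gd_add hwtgd (by rwa [hwteq])
      have hwteq2 : f^[t₁ + u] wt = p := by
        rw [Nat.add_comm, Function.iterate_add_apply, hwteq]; exact hueq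
      obtain ⟨Ω₂, hΩ₂o, hΩ₂p, hΩ₂pull⟩ :=
        pull hf hCcl (t₁ + u) wt hwtgd2 O' hO'open hwtO'
      rw [hwteq2] at hΩ₂p
      refine ⟨Ω₂, hΩ₂o, hΩ₂p, fun _ => ⟨t₁ + u, ?_, hΩ₂pull⟩⟩
      exact Nat.ModEq.add_left t₁ hum
    · exact ⟨univ, isOpen_univ, mem_univ _, fun h => absurd h hpγ⟩
  choose Ωf hΩfo hΩfp hΩfreach using reach
  -- the neighborhood Θ of p
  set Θ : Set X := (⋂ γ ∈ Finset.range m, Ωf γ) ∩ interior (Ph f C p ℓ 0)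
    with hΘdef
  have hΘo : IsOpen Θ :=
    (isOpen_biInter_finset (fun γ _ => hΩfo γ)).inter isOpen_interior
  have hΘp : p ∈ Θ := ⟨mem_iInter₂.2 (fun γ _ => hΩfp γ), hpint⟩
  -- choose z₀, a late preimage of xh in Θ
  have hdens := stDens hst hxC N
  have hmeet : (Θ ∩ ⋃ k : ℕ, {y : X | Gd f C (k + N) y ∧ f^[k + N] y = xh}).Nonempty := by
    have hp2 : p ∈ closure (⋃ k : ℕ, {y : X | Gd f C (k + N) y ∧ f^[k + N] y = xh}) := by
      rw [hdens]; exact mem_univ p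
    exact mem_closure_iff.1 hp2 Θ hΘo hΘp
  obtain ⟨z₀, hz₀Θ, hz₀U⟩ := hmeet
  obtain ⟨k₀, hz₀gd, hz₀eq⟩ := mem_iUnion.1 hz₀U
  set t₀ : ℕ := k₀ + N with ht₀def
  -- phase of z₀
  have hz₀int : z₀ ∈ interior (Ph f C p ℓ t₀) := by
    have h := bwd' hf hCcl hz₀gd (by rw [hz₀eq]; exact hxU)
    rwa [Nat.zero_add] at h
  have hdelta : p ∈ interior (Ph f C p ℓ (t₀ * (ℓ - 1))) :=
    delta hf hCcl hℓ1 hpg hpfix ⟨z₀, hz₀int, hz₀Θ.2⟩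
  -- the correcting residue γ
  set γ : ℕ := (ρ + (t₀ + t₁) * (m - 1)) % m with hγdef
  have hγlt : γ < m := Nat.mod_lt _ (by omega)
  -- modular bookkeeping
  have hmℓ1 : (m - 1) % ℓ = (ℓ - 1) % ℓ := by
    have h5 : ℓ * j = ℓ * (j - 1) + ℓ := by
      have h6 : j = (j - 1) + 1 := by omega
      calc ℓ * j = ℓ * ((j - 1) + 1) := by rw [← h6]
      _ = ℓ * (j - 1) + ℓ := by ring
    have h7 : m - 1 = (ℓ - 1) + ℓ * (j - 1) := by omega
    rw [h7]
    exact Nat.add_mul_mod_self_left (ℓ - 1) ℓ (j - 1)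
  have ht₁ℓ : t₁ % ℓ = 0 % ℓ := Nat.ModEq.of_dvd hℓm ht₁m
  have hγmodℓ : γ % ℓ = (t₀ * (ℓ - 1)) % ℓ := by
    have e0 : Nat.ModEq ℓ γ (ρ + (t₀ + t₁) * (m - 1)) :=
      Nat.ModEq.of_dvd hℓm (Nat.mod_modEq _ m)
    have hρ' : Nat.ModEq ℓ ρ 0 := by
      show ρ % ℓ = 0 % ℓ
      rw [Nat.zero_mod]
      exact hρ
    have e1' : Nat.ModEq ℓ (t₀ + t₁) t₀ := by
      have h := Nat.ModEq.add_left t₀ ht₁ℓ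
      rwa [Nat.add_zero] at h
    have e1 : Nat.ModEq ℓ (ρ + (t₀ + t₁) * (m - 1)) (0 + t₀ * (ℓ - 1)) :=
      Nat.ModEq.add hρ' (Nat.ModEq.mul e1' hmℓ1)
    rw [Nat.zero_add] at e1
    exact e0.trans e1
  have hpγ : p ∈ interior (Ph f C p ℓ γ) := by
    rw [phMod hγmodℓ]
    exact hdelta
  obtain ⟨v, hvm, hvpull⟩ := hΩfreach γ hpγ
  have hz₀Ω : z₀ ∈ Ωf γ := mem_iInter₂.1 hz₀Θ.1 γ (Finset.mem_range.2 hγlt)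
  obtain ⟨z, hzO', hzgd, hzeq⟩ := hvpull z₀ hz₀Ω
  refine ⟨z, hzO'.1, v + t₀, by omega, ?_, gd_add hzgd (by rwa [hzeq]), ?_⟩
  · -- (v + t₀) % m = ρ % m
    have e1 : Nat.ModEq m (v + t₀) (t₁ + γ + t₀) := Nat.ModEq.add_right t₀ hvm
    have e2 : Nat.ModEq m (t₁ + γ + t₀) (t₁ + (ρ + (t₀ + t₁) * (m - 1)) + t₀) :=
      Nat.ModEq.add_right t₀ (Nat.ModEq.add_left t₁ (Nat.mod_modEq _ m))
    have e3 : t₁ + (ρ + (t₀ + t₁) * (m - 1)) + t₀ = ρ + (t₀ + t₁) * m := by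
      have h8 : (t₀ + t₁) * m = (t₀ + t₁) * (m - 1) + (t₀ + t₁) := by
        have h9 : m = (m - 1) + 1 := by omega
        calc (t₀ + t₁) * m = (t₀ + t₁) * ((m - 1) + 1) := by rw [← h9]
        _ = (t₀ + t₁) * (m - 1) + (t₀ + t₁) := by ring
      omega
    have e4 : (ρ + (t₀ + t₁) * m) % m = ρ % m := Nat.add_mul_mod_self_right ρ _ m
    calc (v + t₀) % m = (t₁ + (ρ + (t₀ + t₁) * (m - 1)) + t₀) % m := e1.trans e2
    _ = (ρ + (t₀ + t₁) * m) % m := by rw [e3]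
    _ = ρ % m := e4
  · rw [Nat.add_comm, Function.iterate_add_apply, hzeq]
    exact hz₀eq

end Phase

section Star

variable (hf : IsLocalHomeomorphOn f Cᶜ) (hCcl : IsClosed C)
include hf hCcl

lemma fstar_open {A : Set X} (hA : IsOpen A) : IsOpen (fstar f C A) := by
  rw [isOpen_iff_forall_mem_open]
  rintro x ⟨y, ⟨hyA, hyC⟩, rfl⟩
  obtain ⟨e, hye, hfe⟩ := hf y hyC
  refine ⟨e.target ∩ e.symm ⁻¹' (A ∩ e.source ∩ Cᶜ), ?_, ?_, ?_⟩
  · rintro ζ ⟨hζt, hζp⟩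
    exact ⟨e.symm ζ, ⟨hζp.1.1, hζp.2⟩, by rw [hfe]; exact e.right_inv hζt⟩
  · exact e.symm.continuousOn.isOpen_inter_preimage e.open_target
      ((hA.inter e.open_source).inter hCcl.isOpen_compl)
  · constructor
    · rw [hfe]; exact e.map_source hye
    · rw [Set.mem_preimage, hfe, e.left_inv hye]
      exact ⟨⟨hyA, hye⟩, hyC⟩

lemma fstar_iter_open (n : ℕ) {A : Set X} (hA : IsOpen A) :
    IsOpen ((fstar f C)^[n] A) := by
  induction n with
  | zero => simpa using hA
  | succ k ih =>
    rw [Function.iterate_succ_apply']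
    exact fstar_open hf hCcl ih

omit hf hCcl in
lemma fstar_iter_mem (n : ℕ) (A : Set X) (x : X) :
    x ∈ (fstar f C)^[n] A ↔ ∃ y ∈ A, Gd f C n y ∧ f^[n] y = x := by
  induction n generalizing x with
  | zero =>
    simp only [Function.iterate_zero, id_eq]
    constructor
    · intro hx; exact ⟨x, hx, fun i hi => absurd hi (by omega), by simp⟩
    · rintro ⟨y, hy, -, heq⟩
      rwa [← heq]
  | succ k ih =>
    rw [Function.iterate_succ_apply']
    constructor
    · rintro ⟨y, ⟨hyB, hyC⟩, rfl⟩
      obtain ⟨y₀, hy₀A, hy₀gd, hy₀eq⟩ := (ih y).1 hyB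
      refine ⟨y₀, hy₀A, ?_, ?_⟩
      · apply gd_add hy₀gd
        intro i hi
        have : i = 0 := by omega
        subst this
        simpa [hy₀eq] using hyC
      · rw [Function.iterate_succ_apply', hy₀eq]
    · rintro ⟨y₀, hy₀A, hy₀gd, rfl⟩
      refine ⟨f^[k] y₀, ⟨(ih _).2 ⟨y₀, hy₀A, gd_mono hy₀gd (by omega), rfl⟩, ?_⟩,
        (Function.iterate_succ_apply' f k y₀).symm⟩
      exact hy₀gd k (by omega)

omit hf hCcl in
lemma fstar_mono {A B : Set X} (h : A ⊆ B) : fstar f C A ⊆ fstar f C B :=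
  Set.image_mono (diff_subset_diff_left h)

omit hf hCcl in
lemma fstar_iter_mono (n : ℕ) {A B : Set X} (h : A ⊆ B) :
    (fstar f C)^[n] A ⊆ (fstar f C)^[n] B := by
  induction n with
  | zero => simpa using h
  | succ k ih =>
    rw [Function.iterate_succ_apply', Function.iterate_succ_apply']
    exact fstar_mono ih

end Star

lemma not_crit_iff {f : X → X} {C : Set X} {n : ℕ} {x : X} :
    x ∉ critSet f C n ↔ Gd f C n x := by
  unfold critSet Gd
  simp only [mem_setOf_eq, not_exists, not_and]

lemma crit_compl {f : X → X} {C : Set X} {n : ℕ} :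
    (critSet f C n)ᶜ = {x : X | Gd f C n x} := by
  ext x
  exact not_crit_iff







end Stmt11Aux

open Stmt11Aux in
theorem stmt11 [TopologicalSpace.SeparableSpace X] [BaireSpace X]
    (hballs : ∀ x : X, ∃ γ : ℝ, 0 < γ ∧ IsCompact (Metric.closedBall x γ) ∧
      ∀ ε : ℝ, 0 < ε → ε ≤ γ → IsConnected (Metric.ball x ε))
    (C : Set X) (hCcl : IsClosed C) (hCint : interior C = ∅)
    (f : X → X) (hf : IsLocalHomeomorphOn f Cᶜ)
    (hfib : ∀ x : X, {y | y ∉ C ∧ f y = x}.Finite)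
    (hst : StronglyTransitiveMap f Cᶜ)
    (hper : ∃ n : ℕ, 1 ≤ n ∧ ∃ x : X, x ∉ critSet f C n ∧ f^[n] x = x)
    (ℓ : ℕ)
    (hℓ : ℓ = sInf {n : ℕ | 1 ≤ n ∧ ∃ x : X, x ∉ critSet f C n ∧ f^[n] x = x}) :
    ∃ V : Set X, IsOpen V ∧
      Cᶜ ⊆ ⋃ j < ℓ, (fstar f C)^[j] V ∧
      (fstar f C)^[ℓ] V ⊆ V ∧
      ∀ j : ℕ, 1 ≤ j →
        StronglyTransitiveOnSet (f^[ℓ * j]) (critSet f C (ℓ * j))ᶜ V := by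
  classical
  obtain ⟨n₀, hn₀1, x₀, hx₀⟩ := hper
  have hℓmem : 1 ≤ ℓ ∧ ∃ x : X, x ∉ critSet f C ℓ ∧ f^[ℓ] x = x := by
    rw [hℓ]
    have hmem : n₀ ∈ {n : ℕ | 1 ≤ n ∧ ∃ x : X, x ∉ critSet f C n ∧ f^[n] x = x} :=
      ⟨hn₀1, x₀, hx₀⟩
    exact Nat.sInf_mem ⟨n₀, hmem⟩
  obtain ⟨hℓ1, p, hpcrit, hpfix⟩ := hℓmem
  have hpg : Gd f C ℓ p := not_crit_iff.1 hpcrit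
  rcases isEmpty_or_nonempty X with hX | hX
  · refine ⟨∅, isOpen_empty, ?_, ?_, ?_⟩
    · intro x _
      exact (hX.false x).elim
    · have h : (fstar f C)^[ℓ] (∅ : Set X) = ∅ :=
        Function.iterate_fixed (by simp [fstar]) ℓ
      rw [h]
    · intro j _ x hx
      exact absurd hx (notMem_empty x)
  -- main case
  have hpC : p ∉ C := by
    have h := hpg 0 (by omega)
    simpa using h
  have hdens0p := stDens0 hst hpC
  have hpint : p ∈ interior (Ph f C p ℓ 0) := pint hf hCcl hℓ1 hpg hpfix hdens0p
  set U : Set X := interior (Ph f C p ℓ 0) with hUdef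
  set V : Set X := ⋃ s : ℕ, (fstar f C)^[ℓ * s] (U \ C) with hVdef
  have hUCopen : IsOpen (U \ C) := isOpen_interior.sdiff hCcl
  have hVopen : IsOpen V := isOpen_iUnion (fun s => fstar_iter_open hf hCcl _ hUCopen)
  have hVmem : ∀ x : X, x ∈ V ↔
      ∃ s : ℕ, ∃ y ∈ U \ C, Gd f C (ℓ * s) y ∧ f^[ℓ * s] y = x := by
    intro x
    rw [hVdef, mem_iUnion]
    exact exists_congr (fun s => fstar_iter_mem _ _ x)
  have hUV : U \ C ⊆ V := by
    intro x hx
    rw [hVmem]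
    refine ⟨0, x, hx, fun i hi => absurd hi (by omega), ?_⟩
    rw [Nat.mul_zero, Function.iterate_zero_apply]
  have hVU : V ⊆ U := by
    intro x hx
    obtain ⟨s, y, hy, hgd, heq⟩ := (hVmem x).1 hx
    have hy' : y ∈ interior (Ph f C p ℓ (0 + ℓ * s)) := by
      rw [phMod (show (0 + ℓ * s) % ℓ = 0 % ℓ by simp [Nat.mul_mod_right])]
      exact hy.1
    have h := fwd' hf hCcl hℓ1 hpg hpfix hgd hy'
    rwa [heq] at h
  have hVpre : ∀ x ∈ V, ∀ (t : ℕ) (y : X), t % ℓ = 0 → Gd f C t y → f^[t] y = x →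
      y ∈ V := by
    intro x hx t y hmod hgd heq
    rcases Nat.eq_zero_or_pos t with ht0 | htpos
    · subst ht0
      rw [Function.iterate_zero_apply] at heq
      rwa [heq]
    · have hyC : y ∉ C := by
        have h := hgd 0 htpos
        simpa using h
      have hyU : y ∈ interior (Ph f C p ℓ (0 + t)) :=
        bwd' hf hCcl hgd (by rw [heq]; exact hVU hx)
      rw [phMod (show (0 + t) % ℓ = 0 % ℓ by
        rw [Nat.zero_add, hmod, Nat.zero_mod])] at hyU
      exact hUV ⟨hyU, hyC⟩
  have hVne : V.Nonempty := by
    have hU : (U \ C).Nonempty := by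
      by_contra h
      rw [Set.not_nonempty_iff_eq_empty] at h
      have hsub : U ⊆ C := by
        intro u hu
        by_contra hc
        exact absurd (show u ∈ U \ C from ⟨hu, hc⟩) (by rw [h]; exact notMem_empty u)
      have h2 : U ⊆ interior C := interior_maximal hsub isOpen_interior
      rw [hCint] at h2
      exact h2 hpint
    exact hU.mono hUV
  have hVloop : ∀ q : ℕ, (fstar f C)^[ℓ * q] V ⊆ V := by
    intro q x hx
    obtain ⟨y, hyV, hgd, heq⟩ := (fstar_iter_mem _ _ x).1 hx
    obtain ⟨s, y₀, hy₀, hgd₀, heq₀⟩ := (hVmem y).1 hyV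
    rw [hVmem]
    refine ⟨s + q, y₀, hy₀, ?_, ?_⟩
    · have h1 : ℓ * (s + q) = ℓ * s + ℓ * q := by ring
      rw [h1]
      exact gd_add hgd₀ (by rwa [heq₀])
    · have h1 : ℓ * (s + q) = ℓ * q + ℓ * s := by ring
      rw [h1, Function.iterate_add_apply, heq₀]
      exact heq
  have hV2 : (fstar f C)^[ℓ] V ⊆ V := by
    have h := hVloop 1
    rwa [Nat.mul_one] at h
  have hV1 : Cᶜ ⊆ ⋃ j < ℓ, (fstar f C)^[j] V := by
    intro x hx
    have hd := stDens0 hst hx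
    obtain ⟨v₀, hv₀⟩ := hVne
    have hv₀cl : v₀ ∈ closure {y : X | ∃ t, Gd f C t y ∧ f^[t] y = x} := by
      rw [hd]; exact mem_univ v₀
    obtain ⟨y, hyV, t, hgd, heq⟩ := mem_closure_iff.1 hv₀cl V hVopen hv₀
    have hxmem : x ∈ (fstar f C)^[t] V := (fstar_iter_mem _ _ x).2 ⟨y, hyV, hgd, heq⟩
    have hsplit : t = t % ℓ + ℓ * (t / ℓ) := by
      have h := Nat.mod_add_div t ℓ; omega
    rw [hsplit, Function.iterate_add_apply] at hxmem
    have hxmem2 : x ∈ (fstar f C)^[t % ℓ] V :=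
      fstar_iter_mono _ (hVloop (t / ℓ)) hxmem
    exact mem_iUnion₂.2 ⟨t % ℓ, Nat.mod_lt _ (by omega), hxmem2⟩
  refine ⟨V, hVopen, hV1, hV2, ?_⟩
  intro j hj x hxV z hzV
  set m : ℕ := ℓ * j with hmdef
  have hm1 : 1 ≤ m := Nat.mul_pos (by omega) (by omega)
  have hℓm : ℓ ∣ m := dvd_mul_right ℓ j
  obtain ⟨s, xh, hxh, hgdxh, heqxh⟩ := (hVmem x).1 hxV
  apply subset_closure
  simp only [alphaLim]
  apply Set.mem_iInter.2
  intro n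
  rw [mem_closure_iff]
  intro O hO hzO
  set a : ℕ := (ℓ * s) % m with hadef
  have ham : a < m := Nat.mod_lt _ (by omega)
  have hℓa : ℓ ∣ a := (Nat.dvd_mod_iff hℓm).2 (dvd_mul_right ℓ s)
  set ρ : ℕ := (m - a) % m with hρdef
  have hℓρ : ρ % ℓ = 0 := by
    have h1 : ℓ ∣ m - a := Nat.dvd_sub hℓm hℓa
    have h2 : ℓ ∣ ρ := (Nat.dvd_mod_iff hℓm).2 h1
    exact Nat.mod_eq_zero_of_dvd h2
  obtain ⟨ζ, hζO, t, htN, htm, hζgd, hζeq⟩ :=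
    core hf hCcl hℓ1 hpg hpfix hst hmdef hj hpint hxh.1 hxh.2 O hO
      ⟨z, hzO, hVU hzV⟩ (m * n) ρ hℓρ
  set T : ℕ := t + ℓ * s with hTdef
  have hTmod : T % m = 0 := by
    have e1 : Nat.ModEq m t ρ := htm
    have e2 : Nat.ModEq m (ℓ * s) a := (Nat.mod_modEq _ _).symm
    have e3 : Nat.ModEq m ρ (m - a) := Nat.mod_modEq _ _
    have e4 : Nat.ModEq m T ((m - a) + a) := (e1.trans e3).add e2
    have e5 : (m - a) + a = m := by omega
    rw [e5] at e4
    have e6 : T % m = m % m := e4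
    rwa [Nat.mod_self] at e6
  have hmT : m ∣ T := Nat.dvd_of_mod_eq_zero hTmod
  obtain ⟨q, hq⟩ := hmT
  have hnq : n ≤ q := by
    have h1 : m * n ≤ m * q := by rw [← hq]; omega
    exact Nat.le_of_mul_le_mul_left h1 (by omega)
  have hGdT : Gd f C T ζ := gd_add hζgd (by rwa [hζeq])
  have hfT : f^[T] ζ = x := by
    rw [show T = ℓ * s + t from by omega, Function.iterate_add_apply, hζeq]
    exact heqxh
  have hit2 : ∀ b c : ℕ, (f^[m])^[b] (f^[m * c] ζ) = f^[m * (b + c)] ζ := by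
    intro b c
    calc (f^[m])^[b] (f^[m * c] ζ) = f^[m * b] (f^[m * c] ζ) :=
          (congrFun (Function.iterate_mul f m b) _).symm
    _ = f^[m * b + m * c] ζ := (Function.iterate_add_apply f (m * b) (m * c) ζ).symm
    _ = f^[m * (b + c)] ζ := by rw [Nat.mul_add]
  have hit : ∀ b : ℕ, (f^[m])^[b] ζ = f^[m * b] ζ := by
    intro b
    have h := hit2 b 0
    rw [Nat.mul_zero, Function.iterate_zero_apply, Nat.add_zero] at h
    exact h
  have hkey : ∀ b : ℕ, b ≤ q → f^[m * b] ζ ∈ V := by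
    intro b hb
    have hmb : m * b ≤ T := by
      rw [hq]; exact Nat.mul_le_mul_left m hb
    have h1 : Gd f C (T - m * b) (f^[m * b] ζ) := by
      apply gd_split₂ (a := m * b)
      rw [show m * b + (T - m * b) = T from by omega]
      exact hGdT
    have h2 : f^[T - m * b] (f^[m * b] ζ) = x := by
      rw [← Function.iterate_add_apply, show T - m * b + m * b = T from by omega]
      exact hfT
    have hmod : (T - m * b) % ℓ = 0 := by
      have hd1 : ℓ ∣ T := dvd_trans hℓm ⟨q, hq⟩
      have hd2 : ℓ ∣ m * b := hℓm.mul_right b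
      have hd : ℓ ∣ T - m * b := Nat.dvd_sub hd1 hd2
      exact Nat.mod_eq_zero_of_dvd hd
    exact hVpre x hxV _ _ hmod h1 h2
  have hgood : ∀ b : ℕ, b < q → f^[m * b] ζ ∈ (critSet f C m)ᶜ := by
    intro b hb
    rw [crit_compl]
    intro i hi
    rw [← Function.iterate_add_apply]
    apply hGdT
    have h1 : m * (b + 1) ≤ m * q := Nat.mul_le_mul_left m (by omega)
    have h2 : m * (b + 1) = m * b + m := by ring
    omega
  refine ⟨ζ, hζO, ?_⟩
  rw [mem_iUnion]
  refine ⟨q - n, ?_⟩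
  have hζV : ζ ∈ V := by
    have h := hkey 0 (by omega)
    rwa [Nat.mul_zero, Function.iterate_zero_apply] at h
  simp only [preImg, mem_setOf_eq]
  refine ⟨hζV, ?_, ?_⟩
  · intro i hi
    rw [hit i]
    exact ⟨hgood i (by omega), hkey i (by omega)⟩
  · rw [hit (q - n)]
    refine ⟨hkey (q - n) (by omega), ?_, ?_⟩
    · intro i hi
      rw [hit2 i (q - n)]
      exact ⟨hgood _ (by omega), hkey _ (by omega)⟩
    · rw [hit2 n (q - n), show n + (q - n) = q from by omega]
      show f^[m * q] ζ ∈ ({x} : Set X)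
      rw [← hq, hfT]
      exact rfl
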